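/- Define φ on words in {1,2} built from blocks 1^a2, 1^{a−1}2, …, 12, 2 by φ(1^k 2) = 1 2^{a−k} for 0 ≤ k ≤ a. Let u, v be positive integers with 0 ≤ av − u ≤ v ≤ u, and let E_{u×v} be the Dyck path of size u × v closest to the diagonal. Then φ(E_{u×v}) = E_{v×(av−u)}. -/
import Mathlib


open List

/-- `E_{u×v}`: the Dyck path of size `u × v` closest to the diagonal
(after `x` east steps its height is `⌊v x / u⌋`). -/
def Eword (u v : ℕ) : List Bool :=
  ((List.range u).map
    (fun x => false :: List.replicate (v * (x + 1) / u - v * x / u) true)).flatten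

/-- Parse a word into blocks `1^k 2`, recording the exponents `k`. -/
def parseAux : List Bool → ℕ → List ℕ
  | [], _ => []
  | false :: w, k => parseAux w (k + 1)
  | true :: w, k => k :: parseAux w 0

/-- The mutation `φ`: applied blockwise, `1^k 2 ↦ 1 2^(a-k)`. -/
def mutate (a : ℕ) (w : List Bool) : List Bool :=
  ((parseAux w 0).map (fun k => false :: List.replicate (a - k) true)).flatten

/-- ceiling of `j*u/v` in ℕ (for `v > 0`). -/
def cfn (u v j : ℕ) : ℕ := (j * u + v - 1) / v

lemma g_step_le (u v x : ℕ) (hu : 0 < u) (hvu : v ≤ u) :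
    v * (x+1) / u ≤ v * x / u + 1 := by
  have h1 : v * (x+1) ≤ v * x + u := by
    have : v * (x+1) = v * x + v := by ring
    omega
  calc v * (x+1) / u ≤ (v * x + u) / u := Nat.div_le_div_right h1
    _ = v * x / u + 1 := Nat.add_div_right _ hu

lemma g_mono (u v x : ℕ) : v * x / u ≤ v * (x+1) / u := by
  refine Nat.div_le_div_right ?_
  have : v * (x+1) = v * x + v := by ring
  omega

lemma c_le (u v x : ℕ) (hu : 0 < u) (hv : 0 < v) : cfn u v (v * x / u) ≤ x := by
  have hd := Nat.div_add_mod (v * x) u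
  set j := v * x / u with hj
  have h1 : u * j ≤ v * x := by omega
  have h2 : cfn u v j < x + 1 := by
    unfold cfn
    rw [Nat.div_lt_iff_lt_mul hv]
    have e1 : j * u = u * j := by ring
    have e2 : (x + 1) * v = v * x + v := by ring
    omega
  omega

lemma c_eq (u v x : ℕ) (hu : 0 < u) (hv : 0 < v)
    (hstep : v * (x+1) / u = v * x / u + 1) :
    cfn u v (v * x / u + 1) = x + 1 := by
  have hd := Nat.div_add_mod (v * x) u
  have hm := Nat.mod_lt (v * x) hu
  set j := v * x / u with hj
  have hlink : u * (j + 1) = u * j + u := by ring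
  have h1 : v * x < u * (j + 1) := by omega
  have h2 : u * (j + 1) ≤ v * (x + 1) :=
    calc u * (j + 1) = (v * (x+1) / u) * u := by rw [hstep]; ring
    _ ≤ v * (x + 1) := Nat.div_mul_le_self _ _
  unfold cfn
  refine Nat.div_eq_of_lt_le ?_ ?_
  · have e1 : (x+1) * v = v * x + v := by ring
    have e2 : (j+1) * u = u * (j+1) := by ring
    omega
  · have e1 : (x+1+1) * v = v * (x+1) + v := by ring
    have e2 : (j+1) * u = u * (j+1) := by ring
    omega

lemma c_mono (u v j : ℕ) : cfn u v j ≤ cfn u v (j+1) := by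
  refine Nat.div_le_div_right ?_
  have : (j+1) * u = j * u + u := by ring
  omega

lemma key_div (a u v j : ℕ) (hv : 0 < v) (h1 : u ≤ a * v) :
    (a * v - u) * j / v + cfn u v j = a * j := by
  have hc := Nat.div_add_mod (j * u + v - 1) v
  have hm := Nat.mod_lt (j * u + v - 1) hv
  set q := (j * u + v - 1) / v with hq
  set r := (j * u + v - 1) % v with hr
  have hs : j * u + (v - 1 - r) = v * q := by omega
  set s := v - 1 - r with hsdef
  have hslt : s < v := by omega
  have hqa : q ≤ a * j := by
    by_contra hcon
    push_neg at hcon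
    have h4 : (a * j + 1) * v ≤ q * v := Nat.mul_le_mul_right v hcon
    have e1 : (a * j + 1) * v = j * (a * v) + v := by ring
    have e2 : j * u ≤ j * (a * v) := Nat.mul_le_mul_left j h1
    have e3 : q * v = v * q := by ring
    omega
  have hE : (a * v - u) * j = v * (a * j - q) + s := by
    have hs' : (j : ℤ) * u + s = v * q := by exact_mod_cast congrArg (Nat.cast : ℕ → ℤ) hs
    zify [hqa, h1]
    linear_combination -hs'
  rw [hE, Nat.mul_add_div hv, Nat.div_eq_of_lt hslt]
  unfold cfn
  omega

lemma parse_suffix (u v : ℕ) (hu : 0 < u) (hv : 0 < v) (hvu : v ≤ u) :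
    ∀ n x, x + n = u →
      parseAux (((List.range' x n).map
          (fun y => false :: List.replicate (v * (y + 1) / u - v * y / u) true)).flatten)
        (x - cfn u v (v * x / u))
      = (List.range' (v * x / u) (v - v * x / u)).map
          (fun j => cfn u v (j + 1) - cfn u v j) := by
  intro n
  induction n with
  | zero =>
    intro x hx
    have hxu : x = u := by omega
    subst hxu
    have : v * x / x = v := Nat.mul_div_cancel _ hu
    simp [parseAux, this]
  | succ n ih =>
    intro x hx
    rw [List.range'_succ, List.map_cons, List.flatten_cons]
    have hle := c_le u v x hu hv
    have hmono := g_mono u v x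
    have hstep := g_step_le u v x hu hvu
    have hIH := ih (x+1) (by omega)
    rcases Nat.lt_or_ge (v * x / u) (v * (x+1) / u) with hlt | hge
    · -- d = 1 case
      have hs : v * (x+1) / u = v * x / u + 1 := by omega
      have hc := c_eq u v x hu hv hs
      have hd : v * (x + 1) / u - v * x / u = 1 := by omega
      rw [hd]
      have hgv : v * x / u + 1 ≤ v := by
        have h1 : v * (x+1) ≤ v * u := Nat.mul_le_mul_left v (by omega)
        have h2 : v * (x+1) / u ≤ v * u / u := Nat.div_le_div_right h1
        have h3 : v * u / u = v := Nat.mul_div_cancel _ hu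
        omega
      simp only [List.replicate, List.cons_append, List.nil_append]
      show parseAux (false :: true :: _) _ = _
      rw [show parseAux (false :: true :: (((List.range' (x+1) n).map
          (fun y => false :: List.replicate (v * (y + 1) / u - v * y / u) true)).flatten))
          (x - cfn u v (v * x / u))
        = (x - cfn u v (v * x / u) + 1) :: parseAux (((List.range' (x+1) n).map
          (fun y => false :: List.replicate (v * (y + 1) / u - v * y / u) true)).flatten) 0
        from rfl]
      rw [hs, hc] at hIH
      rw [show (x + 1 - (x+1)) = 0 from by omega] at hIH
      rw [show v - v * x / u = (v - (v * x / u + 1)) + 1 from by omega]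
      rw [List.range'_succ, List.map_cons, ← hIH]
      congr 1
      rw [hc]
      omega
    · -- d = 0 case
      have hs : v * (x+1) / u = v * x / u := by omega
      have hd : v * (x + 1) / u - v * x / u = 0 := by omega
      rw [hd]
      simp only [List.replicate, List.nil_append]
      show parseAux (false :: _) _ = _
      rw [show ∀ L, parseAux (false :: L) (x - cfn u v (v * x / u))
        = parseAux L (x - cfn u v (v * x / u) + 1) from fun L => rfl]
      rw [hs] at hIH
      rw [show (x + 1 - cfn u v (v * x / u)) = (x - cfn u v (v * x / u)) + 1 from by omega] at hIH
      exact hIH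

lemma parse_eword (u v : ℕ) (hu : 0 < u) (hv : 0 < v) (hvu : v ≤ u) :
    parseAux (Eword u v) 0
      = (List.range v).map (fun j => cfn u v (j + 1) - cfn u v j) := by
  have := parse_suffix u v hu hv hvu u 0 (by omega)
  have hc0 : cfn u v (v * 0 / u) = 0 := by
    rw [Nat.mul_zero, Nat.zero_div]
    unfold cfn
    rw [Nat.zero_mul, Nat.zero_add]
    exact Nat.div_eq_of_lt (by omega)
  rw [Nat.mul_zero, Nat.zero_div] at this hc0
  rw [hc0] at this
  simpa [Eword, List.range_eq_range'] using this

/-- Mutation of maximal Dyck paths: for `0 ≤ a v - u ≤ v ≤ u`,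
`φ(E_{u×v}) = E_{v×(av-u)}`. -/
theorem stmt18 (a u v : ℕ) (ha : 3 ≤ a) (hu : 0 < u) (hv : 0 < v)
    (h1 : u ≤ a * v) (h2 : a * v ≤ v + u) (h3 : v ≤ u) :
    mutate a (Eword u v) = Eword v (a * v - u) := by
  unfold mutate
  rw [parse_eword u v hu hv h3]
  unfold Eword
  rw [List.map_map]
  congr 1
  apply List.map_congr_left
  intro j _
  simp only [Function.comp]
  congr 2
  -- a - (cfn u v (j+1) - cfn u v j) = (a*v-u)*(j+1)/v - (a*v-u)*j/v
  have k1 := key_div a u v j hv h1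
  have k2 := key_div a u v (j+1) hv h1
  have hm := c_mono u v j
  have hl : a * (j + 1) = a * j + a := by ring
  omega
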